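/- Let $q=2^r$ and let $n\geq 1$ be an odd integer. Let $C_j(n,q)$ denote the number of codewords of Hamming weight $j$ in $C(DC(n,q))$. Then $C_j(n,q)=C_{N(n,q)-j}(n,q)$ for all $j$ with $0\leq j\leq N(n,q)$. -/
import Mathlib


open scoped BigOperators Classical
open Matrix

noncomputable section

/-- The finite field `F_q` with `q = 2^r` elements. -/
abbrev Fq (r : ℕ) : Type := GaloisField 2 r

noncomputable instance (r : ℕ) : Fintype (Fq r) := Fintype.ofFinite _

/-- The trace map `tr : F_q → F_2`. -/
noncomputable def tr2 (r : ℕ) (x : Fq r) : ZMod 2 := Algebra.trace (ZMod 2) (Fq r) x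

/-- Index type for `(2n+1) × (2n+1)` matrices, split into blocks `n + (n + 1)`. -/
abbrev Idx (n : ℕ) := Fin n ⊕ (Fin n ⊕ Unit)

/-- The quadratic form `θ(x) = ∑_{i=1}^n x_i x_{n+i} + x_{2n+1}²`. -/
def theta (r n : ℕ) (x : Idx n → Fq r) : Fq r :=
  (∑ i : Fin n, x (Sum.inl i) * x (Sum.inr (Sum.inl i))) + x (Sum.inr (Sum.inr ())) ^ 2

/-- Assemble a `(2n+1) × (2n+1)` matrix `[[A, B, e],[C, D, f],[g, h, c]]` from blocks. -/
def blk {α : Type} {n : ℕ} (A B C D : Matrix (Fin n) (Fin n) α)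
    (g h e f : Fin n → α) (c : α) : Matrix (Idx n) (Idx n) α :=
  Matrix.of fun i j =>
    match i, j with
    | Sum.inl i, Sum.inl j => A i j
    | Sum.inl i, Sum.inr (Sum.inl j) => B i j
    | Sum.inl i, Sum.inr (Sum.inr _) => e i
    | Sum.inr (Sum.inl i), Sum.inl j => C i j
    | Sum.inr (Sum.inl i), Sum.inr (Sum.inl j) => D i j
    | Sum.inr (Sum.inl i), Sum.inr (Sum.inr _) => f i
    | Sum.inr (Sum.inr _), Sum.inl j => g j
    | Sum.inr (Sum.inr _), Sum.inr (Sum.inl j) => h j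
    | Sum.inr (Sum.inr _), Sum.inr (Sum.inr _) => c

/-- A square matrix is alternating: symmetric with zero diagonal (characteristic 2). -/
def IsAlt {n : ℕ} {α : Type} [Zero α] (M : Matrix (Fin n) (Fin n) α) : Prop :=
  Mᵀ = M ∧ ∀ i, M i i = 0

/-- The orthogonal group `O(2n+1, q)`: isometries of the quadratic form `θ`. -/
def OGrp (r n : ℕ) : Set (Matrix (Idx n) (Idx n) (Fq r)) :=
  {w | IsUnit w ∧ ∀ x, theta r n (w.mulVec x) = theta r n x}

/-- The maximal parabolic subgroup `P(2n+1, q)`: all products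
`[[A,0,0],[0,ᵗA⁻¹,0],[0,0,1]] * [[1,B,0],[0,1,0],[0,h,1]]` with `A ∈ GL(n,q)` and
`B + ᵗh h` alternating. -/
def Pgrp (r n : ℕ) : Set (Matrix (Idx n) (Idx n) (Fq r)) :=
  {w | ∃ A B h, IsUnit A ∧ IsAlt (B + Matrix.of (fun i j => h i * h j)) ∧
    w = blk A 0 0 ((A⁻¹)ᵀ) 0 0 0 0 1 * blk 1 B 0 1 0 h 0 0 1}

/-- The matrix `σ_k ∈ O(2n+1, q)` interchanging the first `k` coordinates with
coordinates `n+1, …, n+k`. -/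
def sigmaMat (r n k : ℕ) : Matrix (Idx n) (Idx n) (Fq r) :=
  blk (Matrix.of fun i j => if i = j ∧ k ≤ (i : ℕ) then 1 else 0)
      (Matrix.of fun i j => if i = j ∧ (i : ℕ) < k then 1 else 0)
      (Matrix.of fun i j => if i = j ∧ (i : ℕ) < k then 1 else 0)
      (Matrix.of fun i j => if i = j ∧ k ≤ (i : ℕ) then 1 else 0)
      0 0 0 0 1

/-- The double coset `P σ_k P`. -/
def DCoset (r n k : ℕ) : Set (Matrix (Idx n) (Idx n) (Fq r)) :=
  {w | ∃ p ∈ Pgrp r n, ∃ p' ∈ Pgrp r n, w = p * sigmaMat r n k * p'}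

/-- The double coset `P σ_k P` as a finite set. -/
noncomputable def PsPfin (r n k : ℕ) : Finset (Matrix (Idx n) (Idx n) (Fq r)) :=
  (Set.toFinite (DCoset r n k)).toFinset

/-- `DC(n, q) = P σ_{n-1} P`. -/
noncomputable def DCfin (r n : ℕ) : Finset (Matrix (Idx n) (Idx n) (Fq r)) :=
  PsPfin r n (n - 1)

/-- The binary linear code `C(DC(n,q))`: all `u ∈ F_2^N` with `u · v(n,q) = 0`, the dot
product computed in `F_q` (viewing the coordinates of `u` in `F_2 ⊆ F_q`), where
`v(n,q) = (Tr g_1, …, Tr g_N)` for a fixed ordering `g` of `DC(n,q)`. -/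
def codeSet (r n : ℕ) {N : ℕ} (g : Fin N → Matrix (Idx n) (Idx n) (Fq r)) :
    Set (Fin N → ZMod 2) :=
  {u | ∑ i, algebraMap (ZMod 2) (Fq r) (u i) * Matrix.trace (g i) = 0}

/-- The codeword `c(a) = (tr(a·Tr g_1), …, tr(a·Tr g_N))`. -/
noncomputable def cword (r n : ℕ) {N : ℕ} (g : Fin N → Matrix (Idx n) (Idx n) (Fq r))
    (a : Fq r) : Fin N → ZMod 2 :=
  fun i => tr2 r (a * Matrix.trace (g i))

/-- The Hamming weight of a vector. -/
noncomputable def wt {ι K : Type} [Fintype ι] [Zero K] (u : ι → K) : ℕ :=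
  (Finset.univ.filter fun i => u i ≠ 0).card


variable {r n : ℕ}

abbrev Mat (r n : ℕ) := Matrix (Idx n) (Idx n) (Fq r)
abbrev SMat (r n : ℕ) := Matrix (Fin n) (Fin n) (Fq r)

def dMat (A : SMat r n) : Mat r n := blk A 0 0 ((A⁻¹)ᵀ) 0 0 0 0 1
def uMat (B : SMat r n) (h : Fin n → Fq r) : Mat r n := blk 1 B 0 1 0 h 0 0 1

lemma blk_mul {α : Type} [CommRing α] {n : ℕ} (A B C D : Matrix (Fin n) (Fin n) α)
    (g h e f : Fin n → α) (c : α) (A' B' C' D' : Matrix (Fin n) (Fin n) α)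
    (g' h' e' f' : Fin n → α) (c' : α) :
    blk A B C D g h e f c * blk A' B' C' D' g' h' e' f' c' =
    blk (A*A' + B*C' + Matrix.of fun i j => e i * g' j)
        (A*B' + B*D' + Matrix.of fun i j => e i * h' j)
        (C*A' + D*C' + Matrix.of fun i j => f i * g' j)
        (C*B' + D*D' + Matrix.of fun i j => f i * h' j)
        (Matrix.vecMul g A' + Matrix.vecMul h C' + c • g')
        (Matrix.vecMul g B' + Matrix.vecMul h D' + c • h')
        (A.mulVec e' + B.mulVec f' + c' • e)
        (C.mulVec e' + D.mulVec f' + c' • f)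
        (g ⬝ᵥ e' + h ⬝ᵥ f' + c * c') := by
  ext i j
  rcases i with i | i | _ <;> rcases j with j | j | _ <;>
    simp [Matrix.mul_apply, blk, Fintype.sum_sum_type, Matrix.vecMul, Matrix.mulVec,
      dotProduct, mul_comm, add_assoc]

lemma one_eq_blk : (1 : Mat r n) = blk 1 0 0 1 0 0 0 0 1 := by
  ext i j
  rcases i with i | i | _ <;> rcases j with j | j | _ <;>
    simp [Matrix.one_apply, blk]


lemma two_eq_zero : (2 : Fq r) = 0 := by
  have := CharP.cast_eq_zero (Fq r) 2
  exact_mod_cast this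

lemma fq_add_self (x : Fq r) : x + x = 0 := by
  have : x + x = 2 * x := by ring
  rw [this, two_eq_zero, zero_mul]

lemma uMat_mul (B B' : SMat r n) (h h' : Fin n → Fq r) :
    uMat B h * uMat B' h' = uMat (B + B') (h + h') := by
  ext i j
  rcases i with i | i | _ <;> rcases j with j | j | _ <;>
    simp [uMat, Matrix.mul_apply, blk, Fintype.sum_sum_type, Matrix.one_apply,
      Finset.sum_ite_eq, add_comm]

lemma uMat_zero : uMat (0 : SMat r n) 0 = 1 := by
  ext i j
  rcases i with i | i | _ <;> rcases j with j | j | _ <;>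
    simp [uMat, blk, Matrix.one_apply]

lemma uMat_sq (B : SMat r n) (h : Fin n → Fq r) : uMat B h * uMat B h = 1 := by
  rw [uMat_mul]
  have h1 : B + B = 0 := by ext i j; exact fq_add_self _
  have h2 : h + h = 0 := by funext i; exact fq_add_self _
  rw [h1, h2, uMat_zero]

lemma isUnit_uMat (B : SMat r n) (h : Fin n → Fq r) : IsUnit (uMat B h) :=
  ⟨⟨uMat B h, uMat B h, uMat_sq B h, uMat_sq B h⟩, rfl⟩

lemma sigma_eq {r n : ℕ} (k : ℕ) : sigmaMat r n k =
    blk (Matrix.diagonal fun i : Fin n => if k ≤ (i:ℕ) then 1 else 0)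
        (Matrix.diagonal fun i : Fin n => if (i:ℕ) < k then 1 else 0)
        (Matrix.diagonal fun i : Fin n => if (i:ℕ) < k then 1 else 0)
        (Matrix.diagonal fun i : Fin n => if k ≤ (i:ℕ) then 1 else 0)
        0 0 0 0 1 := by
  ext i j
  rcases i with i | i | _ <;> rcases j with j | j | _ <;>
    simp [sigmaMat, blk, Matrix.diagonal, ite_and]


lemma of_zero_zero {r n : ℕ} :
    (Matrix.of fun (_ _ : Fin n) => (0:Fq r)) = 0 := rfl

lemma sigma_sq {r n : ℕ} (k : ℕ) : sigmaMat r n k * sigmaMat r n k = 1 := by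
  rw [sigma_eq, blk_mul]
  have h11 : (Matrix.diagonal (fun i : Fin n => if k ≤ (i:ℕ) then (1:Fq r) else 0) *
      Matrix.diagonal (fun i : Fin n => if k ≤ (i:ℕ) then 1 else 0) +
      Matrix.diagonal (fun i : Fin n => if (i:ℕ) < k then 1 else 0) *
      Matrix.diagonal (fun i : Fin n => if (i:ℕ) < k then 1 else 0)) = 1 := by
    rw [Matrix.diagonal_mul_diagonal, Matrix.diagonal_mul_diagonal, Matrix.diagonal_add,
      ← Matrix.diagonal_one]
    apply congrArg; funext i
    rcases le_or_gt k (i:ℕ) with h | h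
    · simp [h, not_lt.mpr h]
    · simp [h, not_le.mpr h]
  have h12 : (Matrix.diagonal (fun i : Fin n => if k ≤ (i:ℕ) then (1:Fq r) else 0) *
      Matrix.diagonal (fun i : Fin n => if (i:ℕ) < k then 1 else 0) +
      Matrix.diagonal (fun i : Fin n => if (i:ℕ) < k then 1 else 0) *
      Matrix.diagonal (fun i : Fin n => if k ≤ (i:ℕ) then 1 else 0)) = 0 := by
    rw [Matrix.diagonal_mul_diagonal, Matrix.diagonal_mul_diagonal, Matrix.diagonal_add,
      ← Matrix.diagonal_zero]
    apply congrArg; funext i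
    rcases le_or_gt k (i:ℕ) with h | h
    · simp [h, not_lt.mpr h]
    · simp [h, not_le.mpr h]
  have h21 : (Matrix.diagonal (fun i : Fin n => if (i:ℕ) < k then (1:Fq r) else 0) *
      Matrix.diagonal (fun i : Fin n => if k ≤ (i:ℕ) then 1 else 0) +
      Matrix.diagonal (fun i : Fin n => if k ≤ (i:ℕ) then 1 else 0) *
      Matrix.diagonal (fun i : Fin n => if (i:ℕ) < k then 1 else 0)) = 0 := by
    rw [Matrix.diagonal_mul_diagonal, Matrix.diagonal_mul_diagonal, Matrix.diagonal_add,
      ← Matrix.diagonal_zero]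
    apply congrArg; funext i
    rcases le_or_gt k (i:ℕ) with h | h
    · simp [h, not_lt.mpr h]
    · simp [h, not_le.mpr h]
  have h22 : (Matrix.diagonal (fun i : Fin n => if (i:ℕ) < k then (1:Fq r) else 0) *
      Matrix.diagonal (fun i : Fin n => if (i:ℕ) < k then 1 else 0) +
      Matrix.diagonal (fun i : Fin n => if k ≤ (i:ℕ) then 1 else 0) *
      Matrix.diagonal (fun i : Fin n => if k ≤ (i:ℕ) then 1 else 0)) = 1 := by
    rw [Matrix.diagonal_mul_diagonal, Matrix.diagonal_mul_diagonal, Matrix.diagonal_add,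
      ← Matrix.diagonal_one]
    apply congrArg; funext i
    rcases le_or_gt k (i:ℕ) with h | h
    · simp [h, not_lt.mpr h]
    · simp [h, not_le.mpr h]
  simp only [Matrix.vecMul_zero, Matrix.zero_vecMul, Matrix.mulVec_zero,
    zero_dotProduct, dotProduct_zero, Pi.zero_apply, zero_mul, mul_zero,
    smul_zero, zero_smul, add_zero, zero_add, mul_one, one_mul, of_zero_zero]
  rw [h11, h12, h21, h22, one_eq_blk]

lemma isUnit_sigma {r n : ℕ} (k : ℕ) : IsUnit (sigmaMat r n k) :=
  ⟨⟨_, _, sigma_sq k, sigma_sq k⟩, rfl⟩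

lemma isUnit_dMat {r n : ℕ} {A : SMat r n} (hA : IsUnit A) : IsUnit (dMat A) := by
  have hd : IsUnit A.det := (Matrix.isUnit_iff_isUnit_det A).mp hA
  have h1 : dMat A * blk A⁻¹ 0 0 Aᵀ 0 0 0 0 1 = 1 := by
    rw [dMat, blk_mul, one_eq_blk]
    rw [Matrix.mul_nonsing_inv _ hd]
    have : (A⁻¹)ᵀ * Aᵀ = 1 := by
      rw [← Matrix.transpose_mul, Matrix.mul_nonsing_inv _ hd, Matrix.transpose_one]
    rw [this]
    ext i j
    rcases i with i | i | _ <;> rcases j with j | j | _ <;>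
      simp [blk, Matrix.zero_vecMul, Matrix.vecMul_zero, Matrix.mulVec_zero,
        zero_dotProduct, dotProduct_zero]
  have h2 : blk A⁻¹ 0 0 Aᵀ 0 0 0 0 1 * dMat A = 1 := by
    rw [dMat, blk_mul, one_eq_blk]
    rw [Matrix.nonsing_inv_mul _ hd]
    have : Aᵀ * (A⁻¹)ᵀ = 1 := by
      rw [← Matrix.transpose_mul, Matrix.nonsing_inv_mul _ hd, Matrix.transpose_one]
    rw [this]
    ext i j
    rcases i with i | i | _ <;> rcases j with j | j | _ <;>
      simp [blk, Matrix.zero_vecMul, Matrix.vecMul_zero, Matrix.mulVec_zero,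
        zero_dotProduct, dotProduct_zero]
  exact ⟨⟨_, _, h1, h2⟩, rfl⟩

lemma isUnit_of_mem_Pgrp {r n : ℕ} {p : Mat r n} (hp : p ∈ Pgrp r n) : IsUnit p := by
  obtain ⟨A, B, h, hA, _, rfl⟩ := hp
  exact (isUnit_dMat hA).mul (isUnit_uMat B h)

lemma isUnit_of_mem_DCoset {r n k : ℕ} {w : Mat r n} (hw : w ∈ DCoset r n k) : IsUnit w := by
  obtain ⟨p, hp, p', hp', rfl⟩ := hw
  exact ((isUnit_of_mem_Pgrp hp).mul (isUnit_sigma k)).mul (isUnit_of_mem_Pgrp hp')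

def Cond {r n : ℕ} (B : SMat r n) (h : Fin n → Fq r) : Prop :=
  IsAlt (B + Matrix.of (fun i j => h i * h j))

lemma isAlt_add {r n : ℕ} {M M' : SMat r n} (h1 : IsAlt M) (h2 : IsAlt M') :
    IsAlt (M + M') := by
  refine ⟨by rw [Matrix.transpose_add, h1.1, h2.1], fun i => ?_⟩
  simp [Matrix.add_apply, h1.2 i, h2.2 i]

lemma cond_add {r n : ℕ} {B B' : SMat r n} {h h' : Fin n → Fq r}
    (hc : Cond B h) (hc' : Cond B' h') : Cond (B + B') (h + h') := by
  have hcross : IsAlt (Matrix.of fun i j => h i * h' j + h' i * h j) := by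
    refine ⟨by ext i j; simp [Matrix.transpose_apply]; ring, fun i => ?_⟩
    simp only [Matrix.of_apply]
    rw [mul_comm (h' i) (h i)]
    exact fq_add_self _
  have e : (B + B') + Matrix.of (fun i j => (h + h') i * (h + h') j) =
      ((B + Matrix.of fun i j => h i * h j) + (B' + Matrix.of fun i j => h' i * h' j)) +
        Matrix.of (fun i j => h i * h' j + h' i * h j) := by
    ext i j
    simp [Matrix.add_apply, Matrix.of_apply, Pi.add_apply]
    ring
  unfold Cond
  rw [e]
  exact isAlt_add (isAlt_add hc hc') hcross

lemma isAlt_conj {r n : ℕ} {Z : SMat r n} (N : SMat r n) (hZ : IsAlt Z) :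
    IsAlt (N * Z * Nᵀ) := by
  constructor
  · rw [Matrix.transpose_mul, Matrix.transpose_mul, Matrix.transpose_transpose, hZ.1,
      Matrix.mul_assoc]
  · intro i
    have e : (N * Z * Nᵀ) i i = ∑ p : Fin n × Fin n, N i p.1 * Z p.1 p.2 * N i p.2 := by
      rw [Fintype.sum_prod_type]
      simp only [Matrix.mul_apply, Matrix.transpose_apply, Finset.sum_mul]
      rw [Finset.sum_comm]
    rw [e]
    apply Finset.sum_involution (fun p _ => (p.2, p.1))
    · intro p _
      have hsymm : Z p.2 p.1 = Z p.1 p.2 := by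
        conv_lhs => rw [← hZ.1]
        rfl
      rw [hsymm]
      have : N i p.2 * Z p.1 p.2 * N i p.1 = N i p.1 * Z p.1 p.2 * N i p.2 := by ring
      rw [this]
      exact fq_add_self _
    · intro p _ hne
      intro hcon
      apply hne
      have h2 : p.2 = p.1 := congrArg Prod.fst hcon
      rw [h2, hZ.2 p.1]
      ring
    · intro p _; exact Finset.mem_univ _
    · intro p _; rfl

lemma cond_conj {r n : ℕ} {A B : SMat r n} {h : Fin n → Fq r}
    (hc : Cond B h) : Cond (A⁻¹ * B * (A⁻¹)ᵀ) ((A⁻¹).mulVec h) := by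
  have key : A⁻¹ * B * (A⁻¹)ᵀ +
      Matrix.of (fun i j => (A⁻¹).mulVec h i * (A⁻¹).mulVec h j) =
      A⁻¹ * (B + Matrix.of (fun i j => h i * h j)) * (A⁻¹)ᵀ := by
    rw [Matrix.mul_add, Matrix.add_mul]
    congr 1
    ext i j
    simp only [Matrix.mul_apply, Matrix.of_apply, Matrix.mulVec, dotProduct,
      Matrix.transpose_apply, Finset.sum_mul]
    simp only [Finset.mul_sum]
    rw [Finset.sum_comm]
    apply Finset.sum_congr rfl; intro k _
    apply Finset.sum_congr rfl; intro l _
    ring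
  unfold Cond
  rw [key]
  exact isAlt_conj _ hc

lemma Pgrp_iff {r n : ℕ} (w : Mat r n) :
    w ∈ Pgrp r n ↔ ∃ A B h, IsUnit A ∧ Cond B h ∧ w = dMat A * uMat B h := Iff.rfl

lemma uMat_dMat {r n : ℕ} {A : SMat r n} (B : SMat r n) (h : Fin n → Fq r)
    (hA : IsUnit A) :
    uMat B h * dMat A = dMat A * uMat (A⁻¹ * B * (A⁻¹)ᵀ) ((A⁻¹).mulVec h) := by
  have hd : IsUnit A.det := (Matrix.isUnit_iff_isUnit_det A).mp hA
  have hAB : A * (A⁻¹ * B * (A⁻¹)ᵀ) = B * (A⁻¹)ᵀ := by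
    rw [← Matrix.mul_assoc, ← Matrix.mul_assoc, Matrix.mul_nonsing_inv _ hd, Matrix.one_mul]
  unfold uMat dMat
  rw [blk_mul, blk_mul]
  simp only [Matrix.mul_zero, Matrix.zero_mul, Matrix.mul_one, Matrix.one_mul,
    Matrix.vecMul_zero, Matrix.zero_vecMul, Matrix.mulVec_zero, zero_dotProduct,
    dotProduct_zero, Pi.zero_apply, zero_mul, mul_zero, smul_zero, zero_smul,
    one_smul, add_zero, zero_add, mul_one, one_mul, of_zero_zero, hAB,
    Matrix.vecMul_transpose]

lemma uMat_mul_mem_Pgrp {r n : ℕ} {B : SMat r n} {h : Fin n → Fq r}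
    (hc : Cond B h) {p : Mat r n} (hp : p ∈ Pgrp r n) : uMat B h * p ∈ Pgrp r n := by
  obtain ⟨A, B', h', hA, hc', rfl⟩ := hp
  refine ⟨A, A⁻¹ * B * (A⁻¹)ᵀ + B', (A⁻¹).mulVec h + h', hA,
    cond_add (cond_conj hc) hc', ?_⟩
  rw [show (blk A 0 0 ((A⁻¹)ᵀ) 0 0 0 0 1 : Mat r n) = dMat A from rfl,
    show (blk 1 B' 0 1 0 h' 0 0 1 : Mat r n) = uMat B' h' from rfl,
    show (blk 1 (A⁻¹ * B * (A⁻¹)ᵀ + B') 0 1 0 ((A⁻¹).mulVec h + h') 0 0 1 : Mat r n) =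
      uMat (A⁻¹ * B * (A⁻¹)ᵀ + B') ((A⁻¹).mulVec h + h') from rfl,
    ← Matrix.mul_assoc, uMat_dMat B h hA, Matrix.mul_assoc, uMat_mul]

lemma uMat_mul_mem_DCoset {r n k : ℕ} {B : SMat r n} {h : Fin n → Fq r}
    (hc : Cond B h) {w : Mat r n} (hw : w ∈ DCoset r n k) :
    uMat B h * w ∈ DCoset r n k := by
  obtain ⟨p, hp, p', hp', rfl⟩ := hw
  exact ⟨uMat B h * p, uMat_mul_mem_Pgrp hc hp, p', hp',
    by simp [mul_assoc]⟩

lemma uMat_h_inj {r n : ℕ} {B B' : SMat r n} {h h' : Fin n → Fq r}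
    (he : uMat B h = uMat B' h') : h = h' := by
  funext j
  have := congrFun (congrFun he (Sum.inr (Sum.inr ()))) (Sum.inr (Sum.inl j))
  exact this

lemma one_mem_Pgrp {r n : ℕ} : (1 : Mat r n) ∈ Pgrp r n := by
  refine ⟨1, 0, 0, isUnit_one, ?_, ?_⟩
  · constructor
    · ext i j; simp [Matrix.transpose_apply]
    · intro i; simp
  · rw [show (blk (1:SMat r n) 0 0 (((1:SMat r n)⁻¹)ᵀ) 0 0 0 0 1 : Mat r n) =
      dMat 1 from rfl, show (blk (1:SMat r n) 0 0 1 0 0 0 0 1 : Mat r n) = uMat 0 0 from rfl]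
    have : ((1:SMat r n))⁻¹ = 1 := Matrix.inv_eq_left_inv (by simp)
    rw [uMat_zero, Matrix.mul_one, dMat, this, Matrix.transpose_one, ← one_eq_blk]

lemma orbit4 {M R : Type*} [Monoid M] [AddCommMonoid R] (a b : M) (f : M → R)
    (ha2 : a * a = 1) (hb2 : b * b = 1) (hab : a * b = b * a)
    (hsum : ∀ w, f w + f (a * w) + f (b * w) + f (a * (b * w)) = 0) :
    ∀ D : Finset M, (∀ w ∈ D, a * w ∈ D) → (∀ w ∈ D, b * w ∈ D) →
      (∀ w ∈ D, a * w ≠ w) → (∀ w ∈ D, b * w ≠ w) → (∀ w ∈ D, a * (b * w) ≠ w) →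
      ∑ w ∈ D, f w = 0 := by
  intro D
  induction D using Finset.strongInductionOn with
  | _ D ih =>
    intro hDa hDb h1 h2 h3
    rcases D.eq_empty_or_nonempty with rfl | ⟨w₀, hw₀⟩
    · simp
    have haa : ∀ w : M, a * (a * w) = w := fun w => by rw [← mul_assoc, ha2, one_mul]
    have hbb : ∀ w : M, b * (b * w) = w := fun w => by rw [← mul_assoc, hb2, one_mul]
    have hbab : ∀ w : M, b * (a * (b * w)) = a * w := fun w => by
      rw [← mul_assoc, ← hab, mul_assoc, hbb]
    have haab : ∀ w : M, a * (a * (b * w)) = b * w := fun w => haa _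
    -- orbit of w₀
    set O : Finset M := {w₀, a * w₀, b * w₀, a * (b * w₀)} with hO
    have hmem_a : a * w₀ ∈ D := hDa _ hw₀
    have hmem_b : b * w₀ ∈ D := hDb _ hw₀
    have hmem_ab : a * (b * w₀) ∈ D := hDa _ hmem_b
    have ne1 : w₀ ≠ a * w₀ := fun h => h1 _ hw₀ h.symm
    have ne2 : w₀ ≠ b * w₀ := fun h => h2 _ hw₀ h.symm
    have ne3 : w₀ ≠ a * (b * w₀) := fun h => h3 _ hw₀ h.symm
    have ne4 : a * w₀ ≠ b * w₀ := by
      intro h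
      apply h3 _ hw₀
      have h' := congrArg (a * ·) h
      simp only [haa] at h'
      exact h'.symm
    have ne5 : a * w₀ ≠ a * (b * w₀) := by
      intro h
      apply h2 _ hw₀
      have := congrArg (a * ·) h
      simpa [haa] using this.symm
    have ne6 : b * w₀ ≠ a * (b * w₀) := by
      intro h
      apply h1 _ hw₀
      have := congrArg (b * ·) h
      simp only [hbb, hbab] at this
      exact this.symm
    have hOsub : O ⊆ D := by
      intro x hx
      simp only [hO, Finset.mem_insert, Finset.mem_singleton] at hx
      rcases hx with rfl | rfl | rfl | rfl <;> assumption
    have hOsum : ∑ w ∈ O, f w = 0 := by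
      rw [hO]
      rw [Finset.sum_insert (by simp [ne1, ne2, ne3]),
        Finset.sum_insert (by simp [ne4, ne5]),
        Finset.sum_insert (by simp [ne6]), Finset.sum_singleton]
      have := hsum w₀
      rw [← this]
      simp only [add_assoc]
    have hss : D \ O ⊂ D := by
      apply Finset.sdiff_ssubset ?_ ?_
      · intro x hx; exact hOsub hx
      · exact ⟨w₀, by simp [hO]⟩
    have hinO : ∀ x, x ∈ O ↔ (x = w₀ ∨ x = a * w₀ ∨ x = b * w₀ ∨ x = a * (b * w₀)) := by
      intro x; simp [hO]
    have hstep : ∑ w ∈ D \ O, f w = 0 := by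
      apply ih _ hss
      · intro w hw
        rw [Finset.mem_sdiff] at hw ⊢
        refine ⟨hDa _ hw.1, fun hcon => hw.2 ?_⟩
        rw [hinO] at hcon ⊢
        rcases hcon with h | h | h | h
        · right; left; rw [← h, haa]
        · left; have := congrArg (a * ·) h; simpa [haa] using this
        · right; right; right; rw [← h, haa]
        · right; right; left
          have := congrArg (a * ·) h
          simpa [haa] using this
      · intro w hw
        rw [Finset.mem_sdiff] at hw ⊢
        refine ⟨hDb _ hw.1, fun hcon => hw.2 ?_⟩
        rw [hinO] at hcon ⊢
        rcases hcon with h | h | h | h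
        · right; right; left; rw [← h, hbb]
        · right; right; right
          have h' := congrArg (b * ·) h
          simp only [hbb] at h'
          rw [h', ← mul_assoc, ← hab, mul_assoc]
        · left; have := congrArg (b * ·) h; simpa [hbb] using this
        · right; left
          have := congrArg (b * ·) h
          simpa [hbb, hbab] using this
      · intro w hw; exact h1 _ (Finset.mem_sdiff.mp hw).1
      · intro w hw; exact h2 _ (Finset.mem_sdiff.mp hw).1
      · intro w hw; exact h3 _ (Finset.mem_sdiff.mp hw).1
    calc ∑ w ∈ D, f w = ∑ w ∈ O, f w + ∑ w ∈ D \ O, f w := by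
          rw [add_comm, Finset.sum_sdiff hOsub]
      _ = 0 := by rw [hOsum, hstep, add_zero]

lemma mem_PsPfin {r n k : ℕ} {w : Mat r n} : w ∈ PsPfin r n k ↔ w ∈ DCoset r n k :=
  Set.Finite.mem_toFinset _

lemma add_eq_zero_iff_eq {r : ℕ} {x y : Fq r} (h : x + y = 0) : x = y := by
  have := fq_add_self y
  calc x = x + (y + y) := by rw [this, add_zero]
    _ = (x + y) + y := by ring
    _ = y := by rw [h, zero_add]

lemma sum_trace_key {r n : ℕ} (k : ℕ) (B₁ B₂ : SMat r n) (h₁ h₂ : Fin n → Fq r)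
    (c₁ : Cond B₁ h₁) (c₂ : Cond B₂ h₂) (hn1 : h₁ ≠ 0) (hn2 : h₂ ≠ 0) (hn12 : h₁ ≠ h₂) :
    ∑ w ∈ PsPfin r n k, Matrix.trace w = 0 := by
  set a := uMat B₁ h₁ with ha
  set b := uMat B₂ h₂ with hb
  have hab : a * b = b * a := by
    rw [ha, hb, uMat_mul, uMat_mul, add_comm B₁ B₂, add_comm h₁ h₂]
  have hE : (1 : Mat r n) + a + b + a * b = 0 := by
    rw [ha, hb, uMat_mul]
    ext i j
    rcases i with i | i | _ <;> rcases j with j | j | _ <;>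
      simp [uMat, blk, Matrix.one_apply, Matrix.add_apply, Pi.add_apply] <;>
      first
        | (split_ifs <;> simp [fq_add_self])
        | (rw [show B₁ i j + B₂ i j + (B₁ i j + B₂ i j) = 0 from fq_add_self _])
        | (rw [show h₁ j + h₂ j + (h₁ j + h₂ j) = 0 from fq_add_self _])
        | simp [fq_add_self]
  have hsum : ∀ w : Mat r n, Matrix.trace w + Matrix.trace (a * w) + Matrix.trace (b * w)
      + Matrix.trace (a * (b * w)) = 0 := by
    intro w
    have e1 : Matrix.trace w + Matrix.trace (a * w) + Matrix.trace (b * w)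
        + Matrix.trace (a * (b * w)) = Matrix.trace (((1 : Mat r n) + a + b + a * b) * w) := by
      rw [Matrix.add_mul, Matrix.add_mul, Matrix.add_mul, Matrix.one_mul,
        Matrix.trace_add, Matrix.trace_add, Matrix.trace_add, Matrix.mul_assoc]
    rw [e1, hE, Matrix.zero_mul, Matrix.trace_zero]
  have hne_a : a ≠ 1 := by
    intro hcon
    apply hn1
    rw [← uMat_zero] at hcon
    exact uMat_h_inj hcon
  have hne_b : b ≠ 1 := by
    intro hcon
    apply hn2
    rw [← uMat_zero] at hcon
    exact uMat_h_inj hcon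
  have hne_ab : a * b ≠ 1 := by
    intro hcon
    rw [ha, hb, uMat_mul, ← uMat_zero] at hcon
    have := uMat_h_inj hcon
    apply hn12
    funext x
    have hx := congrFun this x
    exact add_eq_zero_iff_eq hx
  apply orbit4 a b Matrix.trace (uMat_sq _ _) (uMat_sq _ _) hab hsum
  · intro w hw
    rw [mem_PsPfin] at hw ⊢
    exact uMat_mul_mem_DCoset c₁ hw
  · intro w hw
    rw [mem_PsPfin] at hw ⊢
    exact uMat_mul_mem_DCoset c₂ hw
  · intro w hw hcon
    apply hne_a
    have hu := isUnit_of_mem_DCoset (mem_PsPfin.mp hw)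
    have : a * w = 1 * w := by rw [hcon, Matrix.one_mul]
    exact hu.mul_left_injective this
  · intro w hw hcon
    apply hne_b
    have hu := isUnit_of_mem_DCoset (mem_PsPfin.mp hw)
    have : b * w = 1 * w := by rw [hcon, Matrix.one_mul]
    exact hu.mul_left_injective this
  · intro w hw hcon
    apply hne_ab
    have hu := isUnit_of_mem_DCoset (mem_PsPfin.mp hw)
    have : (a * b) * w = 1 * w := by rw [Matrix.mul_assoc, hcon, Matrix.one_mul]
    exact hu.mul_left_injective this

lemma isAlt_zero {r n : ℕ} : IsAlt (0 : SMat r n) :=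
  ⟨Matrix.transpose_zero, fun _ => rfl⟩

lemma dMat_one {r n : ℕ} : dMat (1 : SMat r n) = 1 := by
  have h1 : ((1 : SMat r n))⁻¹ = 1 := Matrix.inv_eq_left_inv (by simp)
  rw [dMat, h1, Matrix.transpose_one, ← one_eq_blk]

lemma cond_tt {r n : ℕ} (hn : 0 < n) (t : Fq r) :
    Cond (Matrix.of fun i j => if i = (⟨0, hn⟩ : Fin n) ∧ j = (⟨0, hn⟩ : Fin n)
        then t * t else 0)
      (fun i => if i = (⟨0, hn⟩ : Fin n) then t else 0) := by
  unfold Cond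
  have e : (Matrix.of fun i j => if i = (⟨0, hn⟩ : Fin n) ∧ j = (⟨0, hn⟩ : Fin n)
        then t * t else 0) + Matrix.of (fun i j =>
        (if i = (⟨0, hn⟩ : Fin n) then t else 0) * (if j = (⟨0, hn⟩ : Fin n) then t else 0))
      = (0 : SMat r n) := by
    ext i j
    simp only [Matrix.add_apply, Matrix.of_apply, Matrix.zero_apply, ite_and]
    split_ifs <;> simp [fq_add_self]
  rw [e]
  exact isAlt_zero

lemma cond_e2 {r n : ℕ} (hn : 2 ≤ n) (m : Fin n) :
    Cond (Matrix.of fun i j => if i = m ∧ j = m then (1 : Fq r) else 0)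
      (fun i => if i = m then (1 : Fq r) else 0) := by
  unfold Cond
  have e : (Matrix.of fun i j => if i = m ∧ j = m then (1 : Fq r) else 0) +
      Matrix.of (fun i j => (if i = m then (1:Fq r) else 0) * (if j = m then 1 else 0))
      = (0 : SMat r n) := by
    ext i j
    simp only [Matrix.add_apply, Matrix.of_apply, Matrix.zero_apply, ite_and]
    split_ifs <;> simp [fq_add_self]
  rw [e]
  exact isAlt_zero

lemma exists_third {r : ℕ} (hr : 2 ≤ r) : ∃ z : Fq r, z ≠ 0 ∧ z ≠ 1 := by
  by_contra hcon
  push_neg at hcon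
  have hsub : (Finset.univ : Finset (Fq r)) ⊆ {0, 1} := by
    intro z _
    rcases eq_or_ne z 0 with rfl | hz
    · simp
    · simp [hcon z hz]
  have hcard : Fintype.card (Fq r) = 2 ^ r := by
    have := GaloisField.card 2 r (by omega)
    simpa using this
  have h1 : Fintype.card (Fq r) ≤ 2 := by
    calc Fintype.card (Fq r) = (Finset.univ : Finset (Fq r)).card := (Finset.card_univ).symm
      _ ≤ ({0, 1} : Finset (Fq r)).card := Finset.card_le_card hsub
      _ ≤ 2 := Finset.card_insert_le _ _ |>.trans (by simp)
  have h2 : 4 ≤ 2 ^ r := by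
    calc (4:ℕ) = 2 ^ 2 := rfl
      _ ≤ 2 ^ r := Nat.pow_le_pow_right (by norm_num) hr
  omega

lemma sum_trace_zero_big {r n : ℕ} (k : ℕ) (hpos : 1 ≤ n) (h : 2 ≤ n ∨ 2 ≤ r) :
    ∑ w ∈ PsPfin r n k, Matrix.trace w = 0 := by
  rcases h with hn | hr
  · -- n ≥ 2 : use indices 0 and 1
    have hn0 : 0 < n := by omega
    have hn1 : 1 < n := by omega
    set m0 : Fin n := ⟨0, hn0⟩
    set m1 : Fin n := ⟨1, hn1⟩
    apply sum_trace_key k _ _ _ _ (cond_e2 hn m0) (cond_e2 hn m1)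
    · intro hcon
      have := congrFun hcon m0
      simp [m0] at this
    · intro hcon
      have := congrFun hcon m1
      simp [m1] at this
    · intro hcon
      have := congrFun hcon m0
      have hne : m0 ≠ m1 := by simp [m0, m1, Fin.ext_iff]
      simp [hne] at this
  · -- r ≥ 2 : use t = 1 and t = z at index 0... need n ≥ 1?
    have hn0 : 0 < n := hpos
    obtain ⟨z, hz0, hz1⟩ := exists_third hr
    apply sum_trace_key k _ _ _ _ (cond_tt hn0 1) (cond_tt hn0 z)
    · intro hcon
      have := congrFun hcon ⟨0, hn0⟩
      simp at this
    · intro hcon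
      have := congrFun hcon ⟨0, hn0⟩
      simp [hz0] at this
    · intro hcon
      have := congrFun hcon ⟨0, hn0⟩
      simp at this
      exact hz1 this.symm

lemma sigma_zero {r n : ℕ} : sigmaMat r n 0 = 1 := by
  rw [sigma_eq]
  have h1 : (Matrix.diagonal fun i : Fin n => if 0 ≤ (i:ℕ) then (1:Fq r) else 0) = 1 := by
    rw [← Matrix.diagonal_one]; apply congrArg; funext i; simp
  have h0 : (Matrix.diagonal fun i : Fin n => if (i:ℕ) < 0 then (1:Fq r) else 0) = 0 := by
    rw [← Matrix.diagonal_zero]; apply congrArg; funext i; simp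
  rw [h1, h0, ← one_eq_blk]

lemma fq1_cases (x : Fq 1) : x = 0 ∨ x = 1 := by
  by_contra hcon
  push_neg at hcon
  have hcard : Fintype.card (Fq 1) = 2 := by
    have := GaloisField.card 2 1 one_ne_zero
    simpa using this
  have h3 : ({0, 1, x} : Finset (Fq 1)).card = 3 := by
    rw [Finset.card_insert_of_notMem (by simp [Ne.symm hcon.1, zero_ne_one]),
      Finset.card_insert_of_notMem (by simp [Ne.symm hcon.2]), Finset.card_singleton]
  have hle : ({0, 1, x} : Finset (Fq 1)).card ≤ Fintype.card (Fq 1) := by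
    rw [← Finset.card_univ]
    exact Finset.card_le_card (Finset.subset_univ _)
  omega

def aSp : Mat 1 1 := uMat (Matrix.of fun _ _ => 1) (fun _ => 1)

lemma aSp_mem_Pgrp : aSp ∈ Pgrp 1 1 := by
  rw [Pgrp_iff]
  refine ⟨1, Matrix.of fun _ _ => 1, fun _ => 1, isUnit_one, ?_, ?_⟩
  · unfold Cond
    have e : (Matrix.of fun _ _ : Fin 1 => (1:Fq 1)) +
        Matrix.of (fun i j => (fun _ : Fin 1 => (1:Fq 1)) i * (fun _ : Fin 1 => (1:Fq 1)) j)
        = (0 : SMat 1 1) := by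
      ext i j
      simp only [Matrix.add_apply, Matrix.of_apply, Matrix.zero_apply, mul_one]
      exact fq_add_self 1
    rw [e]
    exact isAlt_zero
  · rw [dMat_one, Matrix.one_mul, aSp]

lemma mem_Pgrp11 {p : Mat 1 1} (hp : p ∈ Pgrp 1 1) : p = 1 ∨ p = aSp := by
  rw [Pgrp_iff] at hp
  obtain ⟨A, B, h, hA, hc, rfl⟩ := hp
  have hdet : A 0 0 ≠ 0 := by
    have := (Matrix.isUnit_iff_isUnit_det A).mp hA
    rw [Matrix.det_fin_one] at this
    exact this.ne_zero
  have hA1 : A = 1 := by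
    ext i j
    rw [Fin.eq_zero i, Fin.eq_zero j]
    rcases fq1_cases (A 0 0) with h0 | h0
    · exact absurd h0 hdet
    · rw [h0]; simp [Matrix.one_apply]
  subst hA1
  rw [dMat_one, Matrix.one_mul]
  have hB : B 0 0 = h 0 * h 0 := by
    have := hc.2 0
    simp only [Matrix.add_apply, Matrix.of_apply] at this
    exact add_eq_zero_iff_eq this
  rcases fq1_cases (h 0) with h0 | h0
  · left
    have hBz : B = 0 := by
      ext i j
      rw [Fin.eq_zero i, Fin.eq_zero j, hB, h0]
      simp
    have hhz : h = 0 := by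
      funext i
      rw [Fin.eq_zero i, h0]
      simp
    rw [hBz, hhz, uMat_zero]
  · right
    have hB1 : B = Matrix.of fun _ _ => 1 := by
      ext i j
      rw [Fin.eq_zero i, Fin.eq_zero j, hB, h0]
      simp
    have hh1 : h = fun _ => 1 := by
      funext i
      rw [Fin.eq_zero i, h0]
    rw [hB1, hh1, aSp]

lemma one_ne_aSp : (1 : Mat 1 1) ≠ aSp := by
  intro hcon
  rw [← uMat_zero, aSp] at hcon
  have := congrFun (uMat_h_inj hcon) 0
  simp at this

lemma DCoset11 : DCoset 1 1 0 = {1, aSp} := by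
  ext w
  constructor
  · rintro ⟨p, hp, p', hp', rfl⟩
    rw [sigma_zero, Matrix.mul_one]
    rcases mem_Pgrp11 hp with rfl | rfl <;> rcases mem_Pgrp11 hp' with rfl | rfl
    · rw [Matrix.one_mul]; exact Set.mem_insert _ _
    · rw [Matrix.one_mul]; exact Set.mem_insert_of_mem _ rfl
    · rw [Matrix.mul_one]; exact Set.mem_insert_of_mem _ rfl
    · rw [show aSp * aSp = 1 from by rw [aSp, uMat_sq]]; exact Set.mem_insert _ _
  · intro hw
    rcases hw with rfl | hw
    · exact ⟨1, one_mem_Pgrp, 1, one_mem_Pgrp, by rw [sigma_zero]; simp⟩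
    · rw [Set.mem_singleton_iff] at hw
      subst hw
      exact ⟨aSp, aSp_mem_Pgrp, 1, one_mem_Pgrp, by rw [sigma_zero]; simp⟩

lemma sum_trace_zero_special : ∑ w ∈ PsPfin 1 1 0, Matrix.trace w = 0 := by
  have hfin : PsPfin 1 1 0 = {1, aSp} := by
    ext w
    rw [mem_PsPfin, DCoset11]
    simp
  rw [hfin, Finset.sum_pair one_ne_aSp]
  have ht1 : Matrix.trace (1 : Mat 1 1) = 3 := by
    rw [Matrix.trace_one]
    simp
  have ht2 : Matrix.trace aSp = 3 := by
    rw [aSp, Matrix.trace]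
    simp [Matrix.diag, Fintype.sum_sum_type, uMat, blk]
    norm_num
  rw [ht1, ht2]
  exact fq_add_self 3

lemma sum_trace_zero {r n : ℕ} (hr : 1 ≤ r) (hn : 1 ≤ n) :
    ∑ w ∈ DCfin r n, Matrix.trace w = 0 := by
  rcases Nat.lt_or_ge n 2 with h2 | h2
  · have hn1 : n = 1 := by omega
    subst hn1
    rcases Nat.lt_or_ge r 2 with hr2 | hr2
    · have hr1 : r = 1 := by omega
      subst hr1
      exact sum_trace_zero_special
    · exact sum_trace_zero_big 0 (by omega) (Or.inr hr2)
  · exact sum_trace_zero_big (n - 1) hn (Or.inl h2)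

lemma zmod2_flip (x : ZMod 2) : (x + 1 ≠ 0) ↔ ¬ (x ≠ 0) := by revert x; decide

lemma zmod2_cancel (x : ZMod 2) : x + 1 + 1 = x := by revert x; decide

/-- For `q = 2^r` and odd `n ≥ 1`: the weight distribution of `C(DC(n,q))` satisfies
`C_j(n,q) = C_{N(n,q)-j}(n,q)` for all `0 ≤ j ≤ N(n,q)`. -/
theorem stmt_8 (r n : ℕ) (hr : 1 ≤ r) (hn : 1 ≤ n) (hodd : Odd n)
    (g : Fin (DCfin r n).card → Matrix (Idx n) (Idx n) (Fq r))
    (hginj : Function.Injective g) (hgmem : ∀ i, g i ∈ DCfin r n)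
    (j : ℕ) (hj : j ≤ (DCfin r n).card) :
    Nat.card {u : Fin (DCfin r n).card → ZMod 2 // u ∈ codeSet r n g ∧ wt u = j} =
      Nat.card {u : Fin (DCfin r n).card → ZMod 2 //
        u ∈ codeSet r n g ∧ wt u = (DCfin r n).card - j} := by
  classical
  have hall : ∑ i : Fin (DCfin r n).card, Matrix.trace (g i) = 0 := by
    have himg : Finset.image g Finset.univ = DCfin r n := by
      apply Finset.eq_of_subset_of_card_le
      · intro x hx
        simp only [Finset.mem_image] at hx
        obtain ⟨i, _, rfl⟩ := hx
        exact hgmem i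
      · rw [Finset.card_image_of_injective _ hginj, Finset.card_univ, Fintype.card_fin]
    calc ∑ i, Matrix.trace (g i)
        = ∑ w ∈ Finset.image g Finset.univ, Matrix.trace w := by
          rw [Finset.sum_image (fun a _ b _ h => hginj h)]
      _ = 0 := by rw [himg]; exact sum_trace_zero hr hn
  have hmemc : ∀ u : Fin (DCfin r n).card → ZMod 2,
      u ∈ codeSet r n g → u + 1 ∈ codeSet r n g := by
    intro u hu
    simp only [codeSet, Set.mem_setOf_eq] at hu ⊢
    have he : ∀ i, algebraMap (ZMod 2) (Fq r) ((u + 1) i) * Matrix.trace (g i) =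
        algebraMap (ZMod 2) (Fq r) (u i) * Matrix.trace (g i) + Matrix.trace (g i) := by
      intro i
      simp [Pi.add_apply, Pi.one_apply, map_add, _root_.map_one, add_mul]
    rw [Finset.sum_congr rfl (fun i _ => he i), Finset.sum_add_distrib, hu, hall, add_zero]
  have hwt : ∀ u : Fin (DCfin r n).card → ZMod 2,
      wt (u + 1) = (DCfin r n).card - wt u := by
    intro u
    have key := Finset.card_filter_add_card_filter_not
      (s := (Finset.univ : Finset (Fin (DCfin r n).card))) (p := fun i => u i ≠ 0)
    rw [Finset.card_univ, Fintype.card_fin] at key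
    have e1 : wt u = (Finset.univ.filter (fun i => u i ≠ 0)).card := by
      unfold wt
      apply Finset.card_bij (fun a _ => a)
      · intro a ha
        simp only [Finset.mem_filter, Finset.mem_univ, true_and] at ha ⊢
        exact ha
      · intro a _ b _ hcon; exact hcon
      · intro b hb
        simp only [Finset.mem_filter, Finset.mem_univ, true_and] at hb ⊢
        exact ⟨b, hb, rfl⟩
    have e2 : wt (u + 1) = (Finset.univ.filter (fun i => ¬ (u i ≠ 0))).card := by
      unfold wt
      apply Finset.card_bij (fun a _ => a)
      · intro a ha
        simp only [Finset.mem_filter, Finset.mem_univ, true_and] at ha ⊢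
        exact (zmod2_flip (u a)).mp ha
      · intro a _ b _ hcon; exact hcon
      · intro b hb
        simp only [Finset.mem_filter, Finset.mem_univ, true_and] at hb ⊢
        exact ⟨b, (zmod2_flip (u b)).mpr hb, rfl⟩
    omega
  apply Nat.card_congr
  refine ⟨fun x => ⟨x.1 + 1, hmemc _ x.2.1, by rw [hwt, x.2.2]⟩,
          fun y => ⟨y.1 + 1, hmemc _ y.2.1, by rw [hwt, y.2.2, Nat.sub_sub_self hj]⟩,
          ?_, ?_⟩
  · intro x
    apply Subtype.ext
    funext i
    exact zmod2_cancel (x.1 i)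
  · intro y
    apply Subtype.ext
    funext i
    exact zmod2_cancel (y.1 i)
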